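/- In the convex setting (CP) with κ = 1, assume additionally that f is α-strongly convex for some α > 0. Let x* ∈ 𝒳 be an optimal solution, let x⁰ ∈ 𝒳 be feasible, and suppose for every k ≥ 0 there exist μ^{k+1} ∈ ℝ^m_{≥0} with ‖μ^{k+1}‖_∞ ≤ B and l^{k+1} ∈ ∂r(x^{k+1}) such that x^{k+1}, μ^{k+1}, l^{k+1} satisfy the GHMA subproblem KKT conditions at x^k. Set L_B := L + B·Σ_{i=1}^m L_i and ρ := 1 − α/L_B, and assume α ≤ L_B. Then for every K ≥ 1: (α/2)‖x^K − x*‖² + (1 − ρ^K)·(F(x^K) − F(x*)) ≤ (α·ρ^K/2)·‖x⁰ − x*‖². -/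

import Mathlib

open scoped RealInnerProductSpace
open Real Set

/-- The convex subdifferential of `r` at `u`. -/
def subgrad {n : ℕ} (r : EuclideanSpace ℝ (Fin n) → ℝ)
    (u : EuclideanSpace ℝ (Fin n)) : Set (EuclideanSpace ℝ (Fin n)) :=
  {l | ∀ z, r u + ⟪l, z - u⟫ ≤ r z}

section AuxLemmas

open Filter

variable {E : Type*} [NormedAddCommGroup E] [InnerProductSpace ℝ E] [CompleteSpace E]

lemma line_hasDerivAt {φ : E → ℝ} {φ' : E → E} (hφ : ∀ y, HasGradientAt φ (φ' y) y)
    (a v : E) (t : ℝ) :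
    HasDerivAt (fun s : ℝ => φ (a + s • v)) ⟪φ' (a + t • v), v⟫ t := by
  have h1 : HasDerivAt (fun s : ℝ => a + s • v) v t := by
    simpa using ((hasDerivAt_id t).smul_const v).const_add a
  have h2 := (hφ (a + t • v)).hasFDerivAt.comp_hasDerivAt t h1
  simp only [InnerProductSpace.toDual_apply_apply] at h2
  exact h2

lemma convex_grad_ineq {φ : E → ℝ} {φ' : E → E} (hφ : ∀ y, HasGradientAt φ (φ' y) y)
    (hconv : ConvexOn ℝ univ φ) (a z : E) :
    φ a + ⟪φ' a, z - a⟫ ≤ φ z := by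
  set v := z - a with hv
  have hd : HasDerivAt (fun s : ℝ => φ (a + s • v)) ⟪φ' a, v⟫ 0 := by
    simpa using line_hasDerivAt hφ a v 0
  have hslope : Tendsto (slope (fun s : ℝ => φ (a + s • v)) 0) (nhdsWithin 0 (Ioi 0))
      (nhds ⟪φ' a, v⟫) :=
    (hasDerivAt_iff_tendsto_slope.mp hd).mono_left
      (nhdsWithin_mono 0 (fun t ht => ne_of_gt ht))
  have hbound : ∀ t ∈ Ioc (0:ℝ) 1,
      slope (fun s : ℝ => φ (a + s • v)) 0 t ≤ φ z - φ a := by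
    intro t ht
    have h1 : φ (a + t • v) ≤ (1 - t) * φ a + t * φ z := by
      have := hconv.2 (mem_univ a) (mem_univ z) (by linarith [ht.2] : (0:ℝ) ≤ 1 - t)
        (le_of_lt ht.1) (by ring)
      have he : (1 - t) • a + t • z = a + t • v := by
        simp [hv, smul_sub, sub_smul]; abel
      simpa [he, smul_eq_mul] using this
    rw [slope_def_field]
    simp only [zero_smul, add_zero, sub_zero]
    rw [div_le_iff₀ ht.1]
    nlinarith [ht.1]
  have : ⟪φ' a, v⟫ ≤ φ z - φ a := by
    refine le_of_tendsto hslope ?_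
    filter_upwards [Ioc_mem_nhdsGT_of_mem (by norm_num : (0:ℝ) ∈ Ico (0:ℝ) 1)] with t ht
      using hbound t ht
  linarith

lemma descent_lemma {φ : E → ℝ} {φ' : E → E} (hφ : ∀ y, HasGradientAt φ (φ' y) y)
    {M : ℝ} (hM : 0 ≤ M) (hlip : ∀ a b, ‖φ' a - φ' b‖ ≤ M * ‖a - b‖) (a b : E) :
    φ b ≤ φ a + ⟪φ' a, b - a⟫ + M / 2 * ‖b - a‖ ^ 2 := by
  set v := b - a with hv
  set g : ℝ → ℝ := fun t => φ (a + t • v) - t * ⟪φ' a, v⟫ - M / 2 * t ^ 2 * ‖v‖ ^ 2 with hg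
  have hgd : ∀ t : ℝ, HasDerivAt g
      (⟪φ' (a + t • v), v⟫ - ⟪φ' a, v⟫ - M * t * ‖v‖ ^ 2) t := by
    intro t
    have h1 := line_hasDerivAt hφ a v t
    have h2 : HasDerivAt (fun s : ℝ => s * ⟪φ' a, v⟫) ⟪φ' a, v⟫ t := by
      simpa using (hasDerivAt_id t).mul_const ⟪φ' a, v⟫
    have h3 : HasDerivAt (fun s : ℝ => M / 2 * s ^ 2 * ‖v‖ ^ 2) (M * t * ‖v‖ ^ 2) t := by
      have : HasDerivAt (fun s : ℝ => s ^ 2) (2 * t) t := by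
        simpa using hasDerivAt_pow 2 t
      have := (this.const_mul (M / 2)).mul_const (‖v‖ ^ 2)
      rw [show M * t * ‖v‖ ^ 2 = M / 2 * (2 * t) * ‖v‖ ^ 2 by ring]; exact this
    exact (h1.sub h2).sub h3
  have hmono : AntitoneOn g (Icc (0:ℝ) 1) := by
    apply antitoneOn_of_deriv_nonpos (convex_Icc 0 1)
    · exact fun t _ => ((hgd t).continuousAt).continuousWithinAt
    · intro t _
      exact ((hgd t).differentiableAt).differentiableWithinAt
    · intro t ht
      rw [interior_Icc] at ht
      rw [(hgd t).deriv]
      have h4 : ⟪φ' (a + t • v) - φ' a, v⟫ ≤ M * t * ‖v‖ ^ 2 := by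
        calc ⟪φ' (a + t • v) - φ' a, v⟫ ≤ ‖φ' (a + t • v) - φ' a‖ * ‖v‖ :=
              real_inner_le_norm _ _
          _ ≤ (M * ‖(a + t • v) - a‖) * ‖v‖ := by
              apply mul_le_mul_of_nonneg_right (hlip _ _) (norm_nonneg _)
          _ = M * t * ‖v‖ ^ 2 := by
              simp [norm_smul, abs_of_pos ht.1]; ring
      rw [inner_sub_left] at h4
      linarith
  have := hmono (by norm_num : (0:ℝ) ∈ Icc (0:ℝ) 1) (by norm_num : (1:ℝ) ∈ Icc (0:ℝ) 1)
    (by norm_num)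
  simp only [hg, zero_smul, add_zero, zero_mul, zero_pow, mul_zero, sub_zero, one_smul,
    one_mul, one_pow, mul_one] at this
  have hb : a + v = b := by simp [hv]
  rw [hb] at this
  linarith

lemma key_arith {α LB ck δ1 e0 e1 : ℝ} (hα : 0 < α) (hLB : 0 < LB)
    (hck : 0 < ck) (hckLB : ck ≤ LB) (hδ1 : 0 ≤ δ1) (he0 : 0 ≤ e0)
    (hm : 2 * δ1 + ck * e1 ≤ (ck - α) * e0) :
    (1 - (1 - α / LB)) * δ1 + (α / 2) * e1 ≤ (1 - α / LB) * ((α / 2) * e0) := by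
  have hid : ck * ((LB - α) * e0 - LB * e1 - 2 * δ1)
      = LB * ((ck - α) * e0 - ck * e1 - 2 * δ1)
        + α * (LB - ck) * e0 + 2 * (LB - ck) * δ1 := by ring
  have t1 : 0 ≤ LB * ((ck - α) * e0 - ck * e1 - 2 * δ1) :=
    mul_nonneg hLB.le (by linarith)
  have t2 : 0 ≤ α * (LB - ck) * e0 :=
    mul_nonneg (mul_nonneg hα.le (by linarith)) he0
  have t3 : 0 ≤ 2 * (LB - ck) * δ1 := mul_nonneg (by linarith) hδ1
  have hG : 0 ≤ ck * ((LB - α) * e0 - LB * e1 - 2 * δ1) := by rw [hid]; linarith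
  have hunif : 2 * δ1 + LB * e1 ≤ (LB - α) * e0 := by
    by_contra hcon
    push_neg at hcon
    nlinarith [mul_pos hck (by linarith : (0:ℝ) < 2 * δ1 + LB * e1 - (LB - α) * e0)]
  have hcoef : (0:ℝ) ≤ α / (2 * LB) := by positivity
  have hmul := mul_le_mul_of_nonneg_left hunif hcoef
  have hLBne : LB ≠ 0 := ne_of_gt hLB
  have he1' : (1 - (1 - α / LB)) * δ1 + (α / 2) * e1
      = α / (2 * LB) * (2 * δ1 + LB * e1) := by field_simp; ring
  have he2' : (1 - α / LB) * ((α / 2) * e0) = α / (2 * LB) * ((LB - α) * e0) := by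
    field_simp
  rw [he1', he2']
  exact hmul

end AuxLemmas


set_option maxHeartbeats 1000000

/-- (Theorem 4 in the paper: linear convergence of GHMA in the
strongly convex Lipschitz case `κ = 1`.)  With `L_B = L + BΣᵢLᵢ`, `ρ = 1 − α/L_B`,
for every `K ≥ 1`:
`(α/2)‖x^K − x*‖² + (1 − ρ^K)(F(x^K) − F(x*)) ≤ (αρ^K/2)‖x⁰ − x*‖²`. -/
theorem ghma_strongly_convex_rate {n m : ℕ}
    (X : Set (EuclideanSpace ℝ (Fin n))) (hXconv : Convex ℝ X) (hXclosed : IsClosed X)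
    (f r : EuclideanSpace ℝ (Fin n) → ℝ)
    (c : Fin m → EuclideanSpace ℝ (Fin n) → ℝ)
    (f' : EuclideanSpace ℝ (Fin n) → EuclideanSpace ℝ (Fin n))
    (c' : Fin m → EuclideanSpace ℝ (Fin n) → EuclideanSpace ℝ (Fin n))
    (hf : ∀ x, HasGradientAt f (f' x) x)
    (hc : ∀ i x, HasGradientAt (c i) (c' i x) x)
    (hfconv : ConvexOn ℝ univ f) (hcconv : ∀ i, ConvexOn ℝ univ (c i))
    (hrconv : ConvexOn ℝ univ r)
    (L : ℝ) (Li : Fin m → ℝ) (hL : 0 < L) (hLi : ∀ i, 0 < Li i)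
    -- Lipschitz gradients (Hölder continuity with κ = 1)
    (hflip : ∀ x y, ‖f' x - f' y‖ ≤ L * ‖x - y‖)
    (hclip : ∀ i x y, ‖c' i x - c' i y‖ ≤ Li i * ‖x - y‖)
    -- α-strong convexity of f
    (α : ℝ) (hα : 0 < α)
    (hsconv : ∀ y z, f y + ⟪f' y, z - y⟫ + (α / 2) * ‖z - y‖ ^ 2 ≤ f z)
    -- the optimal solution
    (xstar : EuclideanSpace ℝ (Fin n)) (hxstarX : xstar ∈ X)
    (hxstarfeas : ∀ i, c i xstar ≤ 0)
    (hxstaropt : ∀ z ∈ X, (∀ i, c i z ≤ 0) → f xstar + r xstar ≤ f z + r z)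
    -- the iterates, their multipliers and subgradients
    (x : ℕ → EuclideanSpace ℝ (Fin n)) (hxX : ∀ k, x k ∈ X)
    (hx0feas : ∀ i, c i (x 0) ≤ 0)
    (B : ℝ) (hB : 0 ≤ B)
    (μ : ℕ → Fin m → ℝ) (l : ℕ → EuclideanSpace ℝ (Fin n))
    (hμpos : ∀ k i, 0 ≤ μ (k + 1) i) (hμB : ∀ k i, μ (k + 1) i ≤ B)
    (hl : ∀ k, l (k + 1) ∈ subgrad r (x (k + 1)))
    -- GHMA subproblem (κ = 1) KKT conditions at x^k, satisfied by x^{k+1}, μ^{k+1}, l^{k+1}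
    (hstat : ∀ k, ∀ z ∈ X, 0 ≤
      ⟪f' (x k) + L • (x (k + 1) - x k) +
        (∑ i, μ (k + 1) i • (c' i (x k) + Li i • (x (k + 1) - x k))) + l (k + 1),
        z - x (k + 1)⟫)
    (hconstr : ∀ k i, c i (x k) + ⟪c' i (x k), x (k + 1) - x k⟫ +
      (Li i / 2) * ‖x (k + 1) - x k‖ ^ 2 ≤ 0)
    (hcomp : ∀ k i, μ (k + 1) i * (c i (x k) + ⟪c' i (x k), x (k + 1) - x k⟫ +
      (Li i / 2) * ‖x (k + 1) - x k‖ ^ 2) = 0)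
    -- α ≤ L_B
    (hαLB : α ≤ L + B * ∑ i, Li i) :
    ∀ K : ℕ, 1 ≤ K →
      (α / 2) * ‖x K - xstar‖ ^ 2 +
        (1 - (1 - α / (L + B * ∑ i, Li i)) ^ K) *
          ((f (x K) + r (x K)) - (f xstar + r xstar)) ≤
      (α * (1 - α / (L + B * ∑ i, Li i)) ^ K / 2) * ‖x 0 - xstar‖ ^ 2 := by

  classical
  have hLB : (0:ℝ) < L + B * ∑ i, Li i := lt_of_lt_of_le hα hαLB
  -- feasibility of all iterates
  have feas : ∀ k i, c i (x k) ≤ 0 := by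
    intro k i
    cases k with
    | zero => exact hx0feas i
    | succ k =>
      have hdl := descent_lemma (hc i) (hLi i).le (hclip i) (x k) (x (k + 1))
      have h2 := hconstr k i
      linarith
  have hδ : ∀ k, 0 ≤ (f (x k) + r (x k)) - (f xstar + r xstar) :=
    fun k => sub_nonneg.2 (hxstaropt (x k) (hxX k) (feas k))
  have hcμ : ∀ k, (0:ℝ) ≤ ∑ i, μ (k + 1) i * Li i :=
    fun k => Finset.sum_nonneg fun i _ => mul_nonneg (hμpos k i) (hLi i).le
  have hcμB : ∀ k, (∑ i, μ (k + 1) i * Li i) ≤ B * ∑ i, Li i := by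
    intro k
    rw [Finset.mul_sum]
    exact Finset.sum_le_sum fun i _ => mul_le_mul_of_nonneg_right (hμB k i) (hLi i).le
  -- the main per-step inequality
  have hmain : ∀ k, 2 * ((f (x (k + 1)) + r (x (k + 1))) - (f xstar + r xstar))
      + (L + ∑ i, μ (k + 1) i * Li i) * ‖x (k + 1) - xstar‖ ^ 2
      ≤ ((L + ∑ i, μ (k + 1) i * Li i) - α) * ‖x k - xstar‖ ^ 2 := by
    intro k
    have hsq : xstar - x (k + 1) = (xstar - x k) - (x (k + 1) - x k) := by abel
    have hstatk := hstat k xstar hxstarX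
    have hexp : (⟪f' (x k) + L • (x (k + 1) - x k) +
        (∑ i, μ (k + 1) i • (c' i (x k) + Li i • (x (k + 1) - x k))) + l (k + 1),
        xstar - x (k + 1)⟫ : ℝ)
        = ⟪f' (x k), xstar - x (k + 1)⟫ + L * ⟪x (k + 1) - x k, xstar - x (k + 1)⟫
          + (∑ i, μ (k + 1) i * (⟪c' i (x k), xstar - x (k + 1)⟫
              + Li i * ⟪x (k + 1) - x k, xstar - x (k + 1)⟫))
          + ⟪l (k + 1), xstar - x (k + 1)⟫ := by
      simp only [inner_add_left, sum_inner, real_inner_smul_left]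
    rw [hexp] at hstatk
    have hsum : (∑ i, μ (k + 1) i * (⟪c' i (x k), xstar - x (k + 1)⟫
        + Li i * ⟪x (k + 1) - x k, xstar - x (k + 1)⟫))
        = (∑ i, μ (k + 1) i * ⟪c' i (x k), xstar - x (k + 1)⟫)
          + (∑ i, μ (k + 1) i * Li i) * ⟪x (k + 1) - x k, xstar - x (k + 1)⟫ := by
      rw [Finset.sum_mul, ← Finset.sum_add_distrib]
      exact Finset.sum_congr rfl fun i _ => by ring
    rw [hsum] at hstatk
    have hfs : (⟪f' (x k), xstar - x (k + 1)⟫ : ℝ)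
        = ⟪f' (x k), xstar - x k⟫ - ⟪f' (x k), x (k + 1) - x k⟫ := by
      rw [hsq, inner_sub_right]
    have hI : (⟪x (k + 1) - x k, xstar - x (k + 1)⟫ : ℝ)
        = (‖x k - xstar‖ ^ 2 - ‖x (k + 1) - xstar‖ ^ 2 - ‖x (k + 1) - x k‖ ^ 2) / 2 := by
      have h0 : x (k + 1) - xstar = (x (k + 1) - x k) + (x k - xstar) := by abel
      have hn := norm_add_sq_real (x (k + 1) - x k) (x k - xstar)
      rw [← h0] at hn
      have h2 : (⟪x (k + 1) - x k, xstar - x (k + 1)⟫ : ℝ)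
          = - ⟪x (k + 1) - x k, x (k + 1) - x k⟫ - ⟪x (k + 1) - x k, x k - xstar⟫ := by
        rw [show xstar - x (k + 1) = -((x (k + 1) - x k) + (x k - xstar)) by abel,
          inner_neg_right, inner_add_right]
        ring
      rw [real_inner_self_eq_norm_sq] at h2
      linarith
    rw [hfs, hI] at hstatk
    have hS : (∑ i, μ (k + 1) i * ⟪c' i (x k), xstar - x (k + 1)⟫)
        ≤ (∑ i, μ (k + 1) i * Li i) * (‖x (k + 1) - x k‖ ^ 2 / 2) := by
      rw [Finset.sum_mul]
      apply Finset.sum_le_sum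
      intro i _
      have hg := convex_grad_ineq (hc i) (hcconv i) (x k) xstar
      have hsplit : (⟪c' i (x k), xstar - x (k + 1)⟫ : ℝ)
          = ⟪c' i (x k), xstar - x k⟫ - ⟪c' i (x k), x (k + 1) - x k⟫ := by
        rw [hsq, inner_sub_right]
      have h1 : (⟪c' i (x k), xstar - x (k + 1)⟫ : ℝ)
          ≤ - c i (x k) - ⟪c' i (x k), x (k + 1) - x k⟫ := by
        have := hxstarfeas i
        rw [hsplit]; linarith
      have h2 := mul_le_mul_of_nonneg_left h1 (hμpos k i)
      have h3 := hcomp k i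
      nlinarith [h2, h3]
    have hsc := hsconv (x k) xstar
    rw [norm_sub_rev xstar (x k)] at hsc
    have hdf := descent_lemma hf hL.le hflip (x k) (x (k + 1))
    have hr := (hl k) xstar
    linarith
  -- monotonicity of F along the iterates
  have mono : ∀ k, f (x (k + 1)) + r (x (k + 1)) ≤ f (x k) + r (x k) := by
    intro k
    have hpq : x k - x (k + 1) = -(x (k + 1) - x k) := by abel
    have hstatk := hstat k (x k) (hxX k)
    have hexp : (⟪f' (x k) + L • (x (k + 1) - x k) +
        (∑ i, μ (k + 1) i • (c' i (x k) + Li i • (x (k + 1) - x k))) + l (k + 1),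
        x k - x (k + 1)⟫ : ℝ)
        = ⟪f' (x k), x k - x (k + 1)⟫ + L * ⟪x (k + 1) - x k, x k - x (k + 1)⟫
          + (∑ i, μ (k + 1) i * (⟪c' i (x k), x k - x (k + 1)⟫
              + Li i * ⟪x (k + 1) - x k, x k - x (k + 1)⟫))
          + ⟪l (k + 1), x k - x (k + 1)⟫ := by
      simp only [inner_add_left, sum_inner, real_inner_smul_left]
    rw [hexp] at hstatk
    have hsum : (∑ i, μ (k + 1) i * (⟪c' i (x k), x k - x (k + 1)⟫
        + Li i * ⟪x (k + 1) - x k, x k - x (k + 1)⟫))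
        = (∑ i, μ (k + 1) i * ⟪c' i (x k), x k - x (k + 1)⟫)
          + (∑ i, μ (k + 1) i * Li i) * ⟪x (k + 1) - x k, x k - x (k + 1)⟫ := by
      rw [Finset.sum_mul, ← Finset.sum_add_distrib]
      exact Finset.sum_congr rfl fun i _ => by ring
    rw [hsum] at hstatk
    have hw1 : (⟪f' (x k), x k - x (k + 1)⟫ : ℝ) = - ⟪f' (x k), x (k + 1) - x k⟫ := by
      rw [hpq, inner_neg_right]
    have hw2 : (⟪x (k + 1) - x k, x k - x (k + 1)⟫ : ℝ) = - ‖x (k + 1) - x k‖ ^ 2 := by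
      rw [hpq, inner_neg_right, real_inner_self_eq_norm_sq]
    rw [hw1, hw2] at hstatk
    have hS : (∑ i, μ (k + 1) i * ⟪c' i (x k), x k - x (k + 1)⟫)
        ≤ (∑ i, μ (k + 1) i * Li i) * (‖x (k + 1) - x k‖ ^ 2 / 2) := by
      rw [Finset.sum_mul]
      apply Finset.sum_le_sum
      intro i _
      have hsplit : (⟪c' i (x k), x k - x (k + 1)⟫ : ℝ)
          = - ⟪c' i (x k), x (k + 1) - x k⟫ := by
        rw [hpq, inner_neg_right]
      have h3 := hcomp k i
      have hμc : μ (k + 1) i * c i (x k) ≤ 0 := by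
        have := mul_le_mul_of_nonneg_left (feas k i) (hμpos k i)
        simpa using this
      rw [hsplit]
      nlinarith [h3, hμc]
    have hdf := descent_lemma hf hL.le hflip (x k) (x (k + 1))
    have hr := (hl k) (x k)
    have hDn : (0:ℝ) ≤ ‖x (k + 1) - x k‖ ^ 2 := sq_nonneg _
    have hprod : (0:ℝ) ≤ (∑ i, μ (k + 1) i * Li i) * ‖x (k + 1) - x k‖ ^ 2 :=
      mul_nonneg (hcμ k) hDn
    have hLD : (0:ℝ) ≤ L * ‖x (k + 1) - x k‖ ^ 2 := mul_nonneg hL.le hDn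
    linarith
  -- per-step inequality with uniform constant
  have key : ∀ k, (1 - (1 - α / (L + B * ∑ i, Li i)))
        * ((f (x (k + 1)) + r (x (k + 1))) - (f xstar + r xstar))
      + (α / 2) * ‖x (k + 1) - xstar‖ ^ 2
      ≤ (1 - α / (L + B * ∑ i, Li i)) * ((α / 2) * ‖x k - xstar‖ ^ 2) := by
    intro k
    exact key_arith hα hLB (by have := hcμ k; linarith)
      (by have := hcμB k; linarith) (hδ (k + 1)) (sq_nonneg _) (hmain k)
  have hρ0 : 0 ≤ 1 - α / (L + B * ∑ i, Li i) := by
    rw [sub_nonneg]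
    exact div_le_one_of_le₀ hαLB hLB.le
  have hρlt : 1 - α / (L + B * ∑ i, Li i) < 1 := by
    have := div_pos hα hLB
    linarith
  -- final induction
  intro K hK
  induction K, hK using Nat.le_induction with
  | base =>
    have h1 := key 0
    rw [pow_one]
    linarith
  | succ K hK ih =>
    have h1 := key K
    have h2 := mono K
    have hρK : 0 ≤ (1 - α / (L + B * ∑ i, Li i)) ^ K := pow_nonneg hρ0 K
    have hρK1 : (1 - α / (L + B * ∑ i, Li i)) ^ K ≤ 1 := pow_le_one₀ hρ0 hρlt.le
    have hcoef : 0 ≤ (1 - α / (L + B * ∑ i, Li i))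
        * (1 - (1 - α / (L + B * ∑ i, Li i)) ^ K) :=
      mul_nonneg hρ0 (by linarith)
    have h3 := mul_le_mul_of_nonneg_left
      (sub_le_sub_right h2 (f xstar + r xstar)) hcoef
    have h4 := mul_le_mul_of_nonneg_left ih hρ0
    rw [pow_succ (1 - α / (L + B * ∑ i, Li i)) K]
    linarith [h1, h3, h4]
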